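/- Let $(\mathcal{A}, \phi)$ be a $*$-noncommutative probability space with $\phi$ a faithful tracial state on a C*-algebra, $p$ a projection of trace $t \in (0,1]$ free from the self-adjoint abelian subalgebra $\mathcal{R} \cong \mathbb{R}^k$ on which $\phi((x_1,\ldots,x_k)) = (x_1 + \cdots + x_k)/k$. Then the map $x \mapsto \|pxp\|$ is a norm on $\mathbb{R}^k$: it is homogeneous, satisfies the triangle inequality, and $\|pxp\| = 0$ implies $x = 0$. -/

import Mathlib

/-- Freeness of two unital subalgebras `S`, `T` with respect to a state `φ`:
any alternating product of centered elements has vanishing `φ`. -/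
def IsFreePair {A : Type*} [Ring A] [Algebra ℂ A] (φ : A → ℂ)
    (S T : Subalgebra ℂ A) : Prop :=
  ∀ (n : ℕ) (a : Fin n → A) (ι : Fin n → Bool),
    (∀ i, a i ∈ (if ι i then S else T)) →
    (∀ i, φ (a i) = 0) →
    (∀ (i : Fin n) (h : i.val + 1 < n), ι i ≠ ι ⟨i.val + 1, h⟩) →
    n ≠ 0 → φ (List.ofFn a).prod = 0

/-- The data defining the `(t)`-norm: a C*-probability space `(A, φ)` with `φ` a
faithful tracial state, a copy of `ℝ^k` embedded as the span of `k` pairwise orthogonal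
self-adjoint projections `q i`, each of trace `1/k`, summing to `1` (so that
`φ((x₁,…,x_k)) = (x₁+⋯+x_k)/k`), and a projection `p` of trace `t`, free from this
copy of `ℝ^k`. -/
structure TNormSetup (A : Type*) [NormedRing A] [StarRing A] [CStarRing A]
    [NormedAlgebra ℂ A] (k : ℕ) (t : ℝ) where
  φ : A →ₗ[ℂ] ℂ
  tracial : ∀ a b : A, φ (a * b) = φ (b * a)
  unital : φ 1 = 1
  pos : ∀ a : A, 0 ≤ (φ (star a * a)).re ∧ (φ (star a * a)).im = 0
  faithful : ∀ a : A, φ (star a * a) = 0 → a = 0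
  q : Fin k → A
  q_sa : ∀ i, star (q i) = q i
  q_proj : ∀ i, q i * q i = q i
  q_orth : ∀ i j, i ≠ j → q i * q j = 0
  q_sum : ∑ i, q i = 1
  q_trace : ∀ i, φ (q i) = (1 : ℂ) / (k : ℂ)
  p : A
  p_sa : star p = p
  p_proj : p * p = p
  p_trace : φ p = (t : ℂ)
  free : IsFreePair (⇑φ) (Algebra.adjoin ℂ {p}) (Algebra.adjoin ℂ (Set.range q))

/-- The embedding of `x ∈ ℝ^k` as a self-adjoint element of `A`. -/
noncomputable def TNormSetup.emb {A : Type*} [NormedRing A] [StarRing A] [CStarRing A]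
    [NormedAlgebra ℂ A] {k : ℕ} {t : ℝ} (S : TNormSetup A k t) (x : Fin k → ℝ) : A :=
  ∑ i, (x i : ℂ) • S.q i

/-- The `(t)`-norm: `‖x‖_{(t)} = ‖p x p‖` (operator norm). -/
noncomputable def tnorm {A : Type*} [NormedRing A] [StarRing A] [CStarRing A]
    [NormedAlgebra ℂ A] {k : ℕ} {t : ℝ} (S : TNormSetup A k t) (x : Fin k → ℝ) : ℝ :=
  ‖S.p * S.emb x * S.p‖

section FreeAux
variable {A : Type*} [Ring A] [Algebra ℂ A] {φ : A → ℂ} {P Q : Subalgebra ℂ A}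
  (hf : IsFreePair φ P Q)
include hf

lemma free2a {r s : A} (hr : r ∈ Q) (hs : s ∈ P) (hr0 : φ r = 0) (hs0 : φ s = 0) :
    φ (r * s) = 0 := by
  have := hf 2 ![r, s] (fun i => decide (i.val % 2 = 1))
    (by intro i; fin_cases i <;> simpa)
    (by intro i; fin_cases i <;> simpa)
    (by intro i h; simp only [ne_eq, decide_eq_decide]; omega)
    (by norm_num)
  simpa [List.ofFn_succ] using this

lemma free2b {r s : A} (hr : r ∈ Q) (hs : s ∈ P) (hr0 : φ r = 0) (hs0 : φ s = 0) :
    φ (s * r) = 0 := by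
  have := hf 2 ![s, r] (fun i => decide (i.val % 2 = 0))
    (by intro i; fin_cases i <;> simpa)
    (by intro i; fin_cases i <;> simpa)
    (by intro i h; simp only [ne_eq, decide_eq_decide]; omega)
    (by norm_num)
  simpa [List.ofFn_succ] using this

lemma free3a {r r' s : A} (hr : r ∈ Q) (hr' : r' ∈ Q) (hs : s ∈ P)
    (hr0 : φ r = 0) (hr'0 : φ r' = 0) (hs0 : φ s = 0) : φ (r * s * r') = 0 := by
  have := hf 3 ![r, s, r'] (fun i => decide (i.val % 2 = 1))
    (by intro i; fin_cases i <;> simpa)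
    (by intro i; fin_cases i <;> simpa)
    (by intro i h; simp only [ne_eq, decide_eq_decide]; omega)
    (by norm_num)
  simpa [List.ofFn_succ, mul_assoc] using this

lemma free3b {r s s' : A} (hr : r ∈ Q) (hs : s ∈ P) (hs' : s' ∈ P)
    (hr0 : φ r = 0) (hs0 : φ s = 0) (hs'0 : φ s' = 0) : φ (s * r * s') = 0 := by
  have := hf 3 ![s, r, s'] (fun i => decide (i.val % 2 = 0))
    (by intro i; fin_cases i <;> simpa)
    (by intro i; fin_cases i <;> simpa)
    (by intro i h; simp only [ne_eq, decide_eq_decide]; omega)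
    (by norm_num)
  simpa [List.ofFn_succ, mul_assoc] using this

lemma free4 {r r' s s' : A} (hr : r ∈ Q) (hr' : r' ∈ Q) (hs : s ∈ P) (hs' : s' ∈ P)
    (hr0 : φ r = 0) (hr'0 : φ r' = 0) (hs0 : φ s = 0) (hs'0 : φ s' = 0) :
    φ (r * s * r' * s') = 0 := by
  have := hf 4 ![r, s, r', s'] (fun i => decide (i.val % 2 = 1))
    (by intro i; fin_cases i <;> simpa)
    (by intro i; fin_cases i <;> simpa)
    (by intro i h; simp only [ne_eq, decide_eq_decide]; omega)
    (by norm_num)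
  simpa [List.ofFn_succ, mul_assoc] using this

end FreeAux

section Key
variable {A : Type*} [NormedRing A] [StarRing A] [CStarRing A] [NormedAlgebra ℂ A]
    {k : ℕ} {t : ℝ} (S : TNormSetup A k t)

lemma p_memP : S.p ∈ Algebra.adjoin ℂ {S.p} :=
  Algebra.subset_adjoin rfl

lemma q_memQ (i : Fin k) : S.q i ∈ Algebra.adjoin ℂ (Set.range S.q) :=
  Algebra.subset_adjoin ⟨i, rfl⟩

lemma key_moment (a : A) (ha : a ∈ Algebra.adjoin ℂ (Set.range S.q)) :
    S.φ (a * S.p * a * S.p)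
      = (t:ℂ)^2 * S.φ (a*a) + (t:ℂ)*(1-(t:ℂ)) * (S.φ a)^2 := by
  set Q := Algebra.adjoin ℂ (Set.range S.q) with hQ
  set P := Algebra.adjoin ℂ {S.p} with hP
  set m := S.φ a with hm
  set u := a - m • 1 with hu
  set v := S.p - (t:ℂ) • 1 with hv
  clear_value m u v
  have hum : u ∈ Q := by rw [hu]; exact Q.sub_mem ha (Q.smul_mem Q.one_mem m)
  have hvm : v ∈ P := by rw [hv]; exact P.sub_mem (p_memP S) (P.smul_mem P.one_mem _)
  have hu0 : S.φ u = 0 := by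
    simp [hu, map_sub, map_smul, S.unital, smul_eq_mul, hm]
  have hv0 : S.φ v = 0 := by
    simp [hv, map_sub, map_smul, S.unital, smul_eq_mul, S.p_trace]
  have h7 : S.φ (u*v) = 0 := free2a S.free hum hvm hu0 hv0
  have h6 : S.φ (v*u) = 0 := free2b S.free hum hvm hu0 hv0
  have h2 : S.φ (u*(v*u)) = 0 := by
    rw [← mul_assoc]; exact free3a S.free hum hum hvm hu0 hu0 hv0
  have h5 : S.φ (v*(u*v)) = 0 := by
    rw [← mul_assoc]; exact free3b S.free hum hvm hvm hu0 hv0 hv0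
  have h1 : S.φ (u*(v*(u*v))) = 0 := by
    rw [← mul_assoc, ← mul_assoc]; exact free4 S.free hum hum hvm hvm hu0 hu0 hv0 hv0
  have hvv : v * v = (1-2*(t:ℂ)) • v + ((t:ℂ) - (t:ℂ)^2) • 1 := by
    rw [hv]
    simp only [sub_mul, mul_sub, smul_mul_assoc, mul_smul_comm, one_mul, mul_one,
      S.p_proj, smul_smul, smul_sub, sub_smul, one_smul]
    module
  have h8 : S.φ (v*v) = (t:ℂ) - (t:ℂ)^2 := by
    rw [hvv]; simp [map_add, map_smul, hv0, S.unital, smul_eq_mul]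
  have h3 : S.φ (u*(v*v)) = 0 := by
    rw [hvv, mul_add, mul_smul_comm, mul_smul_comm, mul_one, map_add, map_smul,
      map_smul, h7, hu0]
    simp
  have h4 : S.φ (u*(u*v)) = 0 := by
    set b := u*u - S.φ (u*u) • 1 with hb
    clear_value b
    have hbm : b ∈ Q := by rw [hb]; exact Q.sub_mem (Q.mul_mem hum hum) (Q.smul_mem Q.one_mem _)
    have hb0 : S.φ b = 0 := by
      simp [hb, map_sub, map_smul, S.unital, smul_eq_mul]
    have hrw : u*(u*v) = b*v + S.φ (u*u) • v := by
      rw [hb, sub_mul, smul_mul_assoc, one_mul, sub_add_cancel, mul_assoc]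
    rw [hrw, map_add, map_smul, free2a S.free hbm hvm hb0 hv0, hv0]
    simp
  have ea : a = u + m • 1 := by rw [hu, sub_add_cancel]
  have ep : S.p = v + (t:ℂ) • 1 := by rw [hv, sub_add_cancel]
  have hsq : S.φ (a*a) = S.φ (u*u) + m^2 := by
    rw [ea]
    simp only [mul_add, add_mul, mul_smul_comm, smul_mul_assoc, mul_one, one_mul,
      smul_smul, map_add, map_smul, smul_eq_mul, hu0, S.unital]
    ring
  rw [hsq, ea, ep]
  simp only [mul_add, add_mul, mul_smul_comm, smul_mul_assoc, mul_one, one_mul,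
    smul_smul, map_add, map_smul, smul_eq_mul, mul_assoc]
  simp only [h1, h2, h3, h4, h5, h6, h7, h8, hu0, hv0, S.unital]
  ring

end Key

section Final
variable {A : Type*} [NormedRing A] [StarRing A] [CStarRing A] [NormedAlgebra ℂ A]
    {k : ℕ} {t : ℝ} (S : TNormSetup A k t)

lemma emb_memQ (x : Fin k → ℝ) : S.emb x ∈ Algebra.adjoin ℂ (Set.range S.q) :=
  Subalgebra.sum_mem _ fun i _ =>
    Subalgebra.smul_mem _ (q_memQ S i) _

lemma phi_emb (x : Fin k → ℝ) : S.φ (S.emb x) = ((∑ i, x i : ℝ) : ℂ) / k := by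
  simp only [TNormSetup.emb, map_sum, map_smul, S.q_trace, smul_eq_mul]
  push_cast
  rw [Finset.sum_div]
  exact Finset.sum_congr rfl fun i _ => by ring

lemma emb_sq (x : Fin k → ℝ) : S.emb x * S.emb x = S.emb (fun i => x i * x i) := by
  rw [TNormSetup.emb, TNormSetup.emb, Finset.sum_mul_sum]
  refine Finset.sum_congr rfl fun i _ => ?_
  rw [Finset.sum_eq_single i]
  · rw [smul_mul_smul_comm, S.q_proj, Complex.ofReal_mul]
  · intro j _ hj
    rw [smul_mul_smul_comm, S.q_orth i j (fun h => hj h.symm), smul_zero]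
  · intro h; exact absurd (Finset.mem_univ i) h

theorem tnorm_aux_main {A : Type*} [NormedRing A] [StarRing A] [CStarRing A] [NormedAlgebra ℂ A]
    {k : ℕ} {t : ℝ} (ht : t ∈ Set.Ioc (0 : ℝ) 1) (S : TNormSetup A k t) :
    (∀ x y : Fin k → ℝ, tnorm S (x + y) ≤ tnorm S x + tnorm S y) ∧
    (∀ (c : ℝ) (x : Fin k → ℝ), tnorm S (c • x) = |c| * tnorm S x) ∧
    (∀ x : Fin k → ℝ, tnorm S x = 0 → x = 0) := by
  refine ⟨?_, ?_, ?_⟩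
  · intro x y
    have he : S.emb (x + y) = S.emb x + S.emb y := by
      simp [TNormSetup.emb, Pi.add_apply, Complex.ofReal_add, add_smul,
        Finset.sum_add_distrib]
    simp only [tnorm, he, mul_add, add_mul]
    exact norm_add_le _ _
  · intro c x
    have he : S.emb (c • x) = (c : ℂ) • S.emb x := by
      rw [TNormSetup.emb, TNormSetup.emb, Finset.smul_sum]
      exact Finset.sum_congr rfl fun i _ => by
        rw [Pi.smul_apply, smul_eq_mul, Complex.ofReal_mul, smul_smul]
    simp only [tnorm, he, mul_smul_comm, smul_mul_assoc]
    rw [norm_smul, Complex.norm_real, Real.norm_eq_abs]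
  · intro x hx
    rcases Nat.eq_zero_or_pos k with hk | hk
    · subst hk; funext i; exact i.elim0
    have hk0 : (k : ℝ) ≠ 0 := Nat.cast_ne_zero.mpr hk.ne'
    rw [tnorm] at hx
    have h0 : S.p * S.emb x * S.p = 0 := norm_eq_zero.mp hx
    have h1 : S.φ (S.emb x * S.p * S.emb x * S.p) = 0 := by
      have : S.emb x * S.p * S.emb x * S.p
          = S.emb x * (S.p * S.emb x * S.p) := by
        simp only [mul_assoc]
      rw [this, h0, mul_zero, map_zero]
    rw [key_moment S _ (emb_memQ S x), emb_sq, phi_emb, phi_emb] at h1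
    set s1 : ℝ := ∑ i, x i with hs1
    set s2 : ℝ := ∑ i, x i * x i with hs2
    have hre : t^2 * s2 / k + t * (1 - t) * (s1 / k)^2 = 0 := by
      have : ((t^2 * s2 / k + t * (1 - t) * (s1 / k)^2 : ℝ) : ℂ) = 0 := by
        push_cast
        linear_combination h1
      exact_mod_cast this
    have hs2nn : 0 ≤ s2 := Finset.sum_nonneg fun i _ => mul_self_nonneg _
    have hA : 0 ≤ t^2 * s2 / k := by positivity
    have hB : 0 ≤ t * (1 - t) * (s1 / k)^2 := by
      have := ht.1; have := ht.2
      have h1t : 0 ≤ 1 - t := by linarith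
      positivity
    have hAz : t^2 * s2 / k = 0 := by linarith
    have hs2z : s2 = 0 := by
      have ht0 : t ≠ 0 := ne_of_gt ht.1
      field_simp at hAz
      rw [mul_zero] at hAz
      rcases mul_eq_zero.mp hAz with h | h
      · exact absurd h (pow_ne_zero 2 ht0)
      · exact h
    have := (Finset.sum_eq_zero_iff_of_nonneg
      (fun i _ => mul_self_nonneg (x i))).mp hs2z
    funext i
    exact mul_self_eq_zero.mp (this i (Finset.mem_univ i))

end Final

/-- the map `x ↦ ‖pxp‖` is a norm on `ℝ^k`: homogeneous, satisfies the
triangle inequality, and definite. -/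
theorem stmt_3 {A : Type*} [NormedRing A] [StarRing A] [CStarRing A] [NormedAlgebra ℂ A]
    {k : ℕ} {t : ℝ} (ht : t ∈ Set.Ioc (0 : ℝ) 1) (S : TNormSetup A k t) :
    (∀ x y : Fin k → ℝ, tnorm S (x + y) ≤ tnorm S x + tnorm S y) ∧
    (∀ (c : ℝ) (x : Fin k → ℝ), tnorm S (c • x) = |c| * tnorm S x) ∧
    (∀ x : Fin k → ℝ, tnorm S x = 0 → x = 0) := by
  exact tnorm_aux_main ht S
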